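/- A finite set of vectors {v_1, ..., v_n} in ℝ^k satisfies ∑ v_i ⊗ v_i = I_k if and only if there exists an orthonormal basis {f_1, ..., f_n} of ℝ^n such that v_i is the orthogonal projection of f_i onto ℝ^k (viewed as the subspace of vectors whose last n−k coordinates vanish). -/

import Mathlib

open Matrix Finset in
lemma key {n : ℕ} {w : Fin n → EuclideanSpace ℝ (Fin n)} (hw : Orthonormal ℝ w) :
    ∀ a b : Fin n, ∑ i, w i a * w i b = if a = b then 1 else 0 := by
  rw [orthonormal_iff_ite] at hw
  set W : Matrix (Fin n) (Fin n) ℝ := Matrix.of fun i j => w i j with hW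
  have hWWT : W * Wᵀ = 1 := by
    ext i j
    have := hw i j
    simp only [PiLp.inner_apply, RCLike.inner_apply, starRingEnd_apply, star_trivial] at this
    simp [hW, Matrix.mul_apply, Matrix.one_apply, mul_comm, this]
    exact (Finset.sum_congr rfl fun _ _ => mul_comm _ _).trans this
  have hWTW := mul_eq_one_comm.mp hWWT
  intro a b
  have := congrFun (congrFun hWTW a) b
  simpa [hW, Matrix.mul_apply, Matrix.one_apply] using this

/-- A family of vectors `v 1, ..., v n` in `ℝ^k` satisfies
`∑ vᵢ ⊗ vᵢ = I_k` (i.e. is a tight frame) if and only if there is an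
orthonormal basis `f 1, ..., f n` of `ℝ^n` such that each `v i` is the orthogonal
projection of `f i` onto `ℝ^k` (the subspace of vectors whose last `n - k`
coordinates vanish), i.e. `v i j = f i j` for `j < k`. -/
theorem stmt_0 (n k : ℕ) (h : k ≤ n) (v : Fin n → Fin k → ℝ) :
    (∑ i, Matrix.vecMulVec (v i) (v i) = (1 : Matrix (Fin k) (Fin k) ℝ)) ↔
    ∃ b : OrthonormalBasis (Fin n) ℝ (EuclideanSpace ℝ (Fin n)),
      ∀ (i : Fin n) (j : Fin k), v i j = b i (Fin.castLE h j) := by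
  have hfr : Module.finrank ℝ (EuclideanSpace ℝ (Fin n)) = Fintype.card (Fin n) := by
    simp
  constructor
  · intro hv
    have hsum : ∀ a b : Fin k, ∑ i, v i a * v i b = if a = b then 1 else 0 := by
      intro a b
      have := congrFun (congrFun hv a) b
      simpa [Matrix.sum_apply, Matrix.vecMulVec_apply, Matrix.one_apply] using this
    -- columns as vectors in ℝ^n, extended over Fin n
    set u : Fin n → EuclideanSpace ℝ (Fin n) :=
      fun m => if hm : (m : ℕ) < k then WithLp.toLp 2 (fun i => v i ⟨m, hm⟩) else 0 with hu
    set s : Set (Fin n) := Set.range (Fin.castLE h) with hs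
    have hres : Orthonormal ℝ (s.restrict u) := by
      rw [orthonormal_iff_ite]
      rintro ⟨m, a, rfl⟩ ⟨m', b, rfl⟩
      have hm : ((Fin.castLE h a : Fin n) : ℕ) < k := a.isLt
      have hm' : ((Fin.castLE h b : Fin n) : ℕ) < k := b.isLt
      simp only [Set.restrict_apply, hu, dif_pos hm, dif_pos hm', PiLp.inner_apply, PiLp.toLp_apply,
        RCLike.inner_apply, starRingEnd_apply, star_trivial]
      dsimp only [Set.restrict, Set.domRestrict]
      simp only [dif_pos hm, dif_pos hm', PiLp.toLp_apply]
      conv_lhs => arg 2; ext x; rw [mul_comm]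
      have ha : (⟨(Fin.castLE h a : Fin n), hm⟩ : Fin k) = a := by ext; simp
      have hb : (⟨(Fin.castLE h b : Fin n), hm'⟩ : Fin k) = b := by ext; simp
      rw [ha, hb, hsum a b]
      congr 1
      simp [Subtype.ext_iff, Fin.castLE_inj]
    obtain ⟨g, hg⟩ := hres.exists_orthonormalBasis_extension_of_card_eq hfr
    have hgkey := key g.orthonormal
    -- transpose family
    set bt : Fin n → EuclideanSpace ℝ (Fin n) := fun i => WithLp.toLp 2 (fun m => g m i) with hbt
    have hbto : Orthonormal ℝ (Set.univ.restrict bt) := by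
      rw [orthonormal_iff_ite]
      rintro ⟨a, -⟩ ⟨b, -⟩
      simp only [Set.restrict_apply, hbt, PiLp.inner_apply, PiLp.toLp_apply, RCLike.inner_apply,
        starRingEnd_apply, star_trivial]
      dsimp only [Set.restrict, Set.domRestrict]
      conv_lhs => arg 2; ext x; rw [mul_comm]
      rw [hgkey a b]
      congr 1
      simp [Subtype.ext_iff]
    obtain ⟨bb, hbb⟩ := hbto.exists_orthonormalBasis_extension_of_card_eq hfr
    refine ⟨bb, fun i j => ?_⟩
    have h1 : bb i = bt i := hbb i (Set.mem_univ i)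
    have h2 : g (Fin.castLE h j) = u (Fin.castLE h j) := hg _ ⟨j, rfl⟩
    have hm : ((Fin.castLE h j : Fin n) : ℕ) < k := j.isLt
    have h3 : u (Fin.castLE h j) i = v i j := by
      have : (⟨((Fin.castLE h j : Fin n) : ℕ), hm⟩ : Fin k) = j := by ext; simp
      simp only [hu, dif_pos hm, PiLp.toLp_apply]
      rw [this]
    rw [h1]
    show v i j = g (Fin.castLE h j) i
    rw [h2]
    exact h3.symm
  · rintro ⟨b, hb⟩
    have hkey := key b.orthonormal
    ext a c
    simp only [Matrix.sum_apply, Matrix.vecMulVec_apply, Matrix.one_apply]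
    calc ∑ i, v i a * v i c = ∑ i, b i (Fin.castLE h a) * b i (Fin.castLE h c) := by
          simp_rw [hb]
      _ = if Fin.castLE h a = Fin.castLE h c then 1 else 0 := hkey _ _
      _ = if a = c then 1 else 0 := by
          congr 1
          simp [Fin.ext_iff]
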